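/- If S is a k-monoid with respect to δ : S → ℕᵏ where k ≥ 1, and δ is not surjective, then S admits a monoid homomorphism δ' : S → ℕ^(k-1) with the UFP, so S is also a (k-1)-monoid. -/

import Mathlib

/-- δ : S → ℕᵏ makes S a k-monoid: δ is a monoid homomorphism with the
unique factorization property. -/
def KUFP {S : Type*} [Monoid S] {k : ℕ} (δ : S → Fin k → ℕ) : Prop :=
  δ 1 = 0 ∧ (∀ x y : S, δ (x * y) = δ x + δ y) ∧
  ∀ (x : S) (m n : Fin k → ℕ), δ x = m + n →
    ∃! p : S × S, x = p.1 * p.2 ∧ δ p.1 = m ∧ δ p.2 = n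

theorem kmonoid_not_surjective {S : Type*} [Monoid S] {k : ℕ} (hk : 1 ≤ k)
    (δ : S → Fin k → ℕ) (h : KUFP δ)
    (hns : ¬ Function.Surjective δ) :
    ∃ δ' : S → Fin (k - 1) → ℕ, KUFP δ' := by
  obtain ⟨n, rfl⟩ : ∃ n, k = n + 1 := ⟨k - 1, (Nat.succ_pred_eq_of_pos hk).symm⟩
  obtain ⟨h1, hmul, hufp⟩ := h
  have hpow : ∀ (y : S) (N : ℕ), δ (y ^ N) = N • δ y := by
    intro y N
    induction N with
    | zero => simpa using h1
    | succ p ih => rw [pow_succ, hmul, ih, succ_nsmul]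
  -- there is a coordinate where δ is always zero
  have hzero : ∃ i₀ : Fin (n + 1), ∀ x : S, δ x i₀ = 0 := by
    by_contra hc
    push_neg at hc
    choose f hf using hc
    apply hns
    set y := (List.ofFn f).prod with hy
    have hδprod : ∀ (l : List S), δ l.prod = (l.map δ).sum := by
      intro l
      induction l with
      | nil => simpa using h1
      | cons a t ih => rw [List.prod_cons, hmul, ih, List.map_cons, List.sum_cons]
    have hy1 : ∀ i, 1 ≤ δ y i := by
      intro i
      have h2 : 1 ≤ δ (f i) i := Nat.one_le_iff_ne_zero.2 (hf i)
      have hmem : δ (f i) ∈ (List.ofFn f).map δ := List.mem_map_of_mem (f := δ) (List.mem_ofFn.2 ⟨i, rfl⟩)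
      have hle : δ (f i) i ≤ ((List.ofFn f).map δ).sum i := by
        have := List.single_le_sum (l := (List.ofFn f).map δ) (fun x _ => by positivity) _ hmem
        exact this i
      rw [hy, hδprod]
      omega
    intro m
    set N := ∑ i : Fin (n + 1), m i with hN
    have hle : ∀ i, m i ≤ δ (y ^ N) i := by
      intro i
      have h3 : m i ≤ N :=
        Finset.single_le_sum (fun _ _ => Nat.zero_le _) (Finset.mem_univ i)
      have h4 : N * 1 ≤ N * δ y i := Nat.mul_le_mul_left N (hy1 i)
      rw [hpow]
      simp only [Pi.smul_apply, smul_eq_mul]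
      omega
    have hsplit : δ (y ^ N) = m + (δ (y ^ N) - m) := by
      funext i
      have := hle i
      simp only [Pi.add_apply, Pi.sub_apply]
      omega
    obtain ⟨p, ⟨_, hp1, _⟩, _⟩ := hufp (y ^ N) m (δ (y ^ N) - m) hsplit
    exact ⟨p.1, hp1⟩
  obtain ⟨i₀, hi₀⟩ := hzero
  refine ⟨fun x j => δ x (i₀.succAbove j), ?_, ?_, ?_⟩
  · funext j; simp [h1]
  · intro x y; funext j; simp [hmul]
  · intro x m m' hx
    have hsplit : δ x = i₀.insertNth 0 m + i₀.insertNth 0 m' := by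
      funext i
      by_cases hi : i = i₀
      · subst hi; simp [hi₀ x]
      · obtain ⟨j, rfl⟩ := Fin.exists_succAbove_eq hi
        simpa using congrFun hx j
    obtain ⟨p, ⟨hpx, hp1, hp2⟩, hpu⟩ :=
      hufp x (i₀.insertNth 0 m) (i₀.insertNth 0 m') hsplit
    refine ⟨p, ⟨hpx, ?_, ?_⟩, ?_⟩
    · funext j
      show δ p.1 (i₀.succAbove j) = m j
      rw [hp1]; simp
    · funext j
      show δ p.2 (i₀.succAbove j) = m' j
      rw [hp2]; simp
    · rintro q ⟨hqx, hq1, hq2⟩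
      apply hpu
      refine ⟨hqx, ?_, ?_⟩
      · funext i
        by_cases hi : i = i₀
        · subst hi; simp [hi₀ q.1]
        · obtain ⟨j, rfl⟩ := Fin.exists_succAbove_eq hi
          simpa using congrFun hq1 j
      · funext i
        by_cases hi : i = i₀
        · subst hi; simp [hi₀ q.2]
        · obtain ⟨j, rfl⟩ := Fin.exists_succAbove_eq hi
          simpa using congrFun hq2 j
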